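/- (Proposition 2.) Define α̂₀ : ℝ → ℝ by α̂₀(ρ) = Φ(ρ)·(1 − ρ·Φ(−ρ)/φ(ρ)). Then for every ρ ∈ ℝ, α̂₀ is differentiable at ρ with derivative dα̂₀(ρ)/dρ = ( (f + p·ρ)·(f − q·ρ) − q·p ) / f, where p = Φ(ρ), q = Φ(−ρ), and f = φ(ρ). -/

import Mathlib

open MeasureTheory ProbabilityTheory

/-- The standard normal density φ(t) = (2π)^{-1/2} e^{-t²/2}. -/
noncomputable def stdNormalPDF (t : ℝ) : ℝ :=
  (Real.sqrt (2 * Real.pi))⁻¹ * Real.exp (-t ^ 2 / 2)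

/-- The standard normal distribution function Φ(x) = ∫_{-∞}^x φ(t) dt. -/
noncomputable def stdNormalCDF (x : ℝ) : ℝ :=
  ∫ t in Set.Iic x, stdNormalPDF t

/-- The estimate α̂₀ of the optimal acceptance threshold as a function of the
adjusted mean ρ of the environment. -/
noncomputable def optThreshold (ρ : ℝ) : ℝ :=
  stdNormalCDF ρ * (1 - ρ * stdNormalCDF (-ρ) / stdNormalPDF ρ)

lemma pdf_pos (t : ℝ) : 0 < stdNormalPDF t := by
  unfold stdNormalPDF
  positivity

lemma pdf_even (t : ℝ) : stdNormalPDF (-t) = stdNormalPDF t := by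
  simp [stdNormalPDF]

lemma pdf_continuous : Continuous stdNormalPDF := by
  unfold stdNormalPDF
  fun_prop

lemma pdf_integrable : Integrable stdNormalPDF := by
  have h : Integrable (fun t : ℝ => Real.exp (-(1/2 : ℝ) * t ^ 2)) :=
    integrable_exp_neg_mul_sq (by norm_num)
  have := h.const_mul ((Real.sqrt (2 * Real.pi))⁻¹)
  convert this using 2 with t
  unfold stdNormalPDF
  ring_nf

lemma hasDerivAt_pdf (t : ℝ) : HasDerivAt stdNormalPDF (-t * stdNormalPDF t) t := by
  have h1 : HasDerivAt (fun x : ℝ => -x ^ 2 / 2) (-t) t := by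
    have := ((hasDerivAt_pow 2 t).neg).div_const 2
    refine this.congr_deriv ?_
    ring
  have h2 := h1.exp
  have h3 := h2.const_mul ((Real.sqrt (2 * Real.pi))⁻¹)
  unfold stdNormalPDF
  refine h3.congr_deriv ?_
  ring

lemma hasDerivAt_cdf (x : ℝ) : HasDerivAt stdNormalCDF (stdNormalPDF x) x := by
  have hkey : ∀ y : ℝ, stdNormalCDF y = stdNormalCDF 0 + ∫ t in (0:ℝ)..y, stdNormalPDF t := by
    intro y
    rw [← intervalIntegral.integral_Iic_sub_Iic pdf_integrable.integrableOn
      pdf_integrable.integrableOn]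
    unfold stdNormalCDF; ring
  have hD : HasDerivAt (fun y => ∫ t in (0:ℝ)..y, stdNormalPDF t) (stdNormalPDF x) x :=
    intervalIntegral.integral_hasDerivAt_right
      (pdf_integrable.intervalIntegrable)
      (pdf_continuous.aestronglyMeasurable.stronglyMeasurableAtFilter)
      pdf_continuous.continuousAt
  have hfun : stdNormalCDF = fun y => stdNormalCDF 0 + ∫ t in (0:ℝ)..y, stdNormalPDF t :=
    funext hkey
  rw [hfun]
  exact hD.const_add _

/-- Proposition 2: the derivative of the estimated optimal acceptance
threshold α̂₀ with respect to ρ. -/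
theorem hasDerivAt_optThreshold (ρ : ℝ) (p q f : ℝ)
    (hp : p = stdNormalCDF ρ) (hq : q = stdNormalCDF (-ρ)) (hf : f = stdNormalPDF ρ) :
    HasDerivAt optThreshold (((f + p * ρ) * (f - q * ρ) - q * p) / f) ρ := by
  subst hp hq hf
  have hfne : stdNormalPDF ρ ≠ 0 := (pdf_pos ρ).ne'
  have h1 : HasDerivAt stdNormalCDF (stdNormalPDF ρ) ρ := hasDerivAt_cdf ρ
  have h2 : HasDerivAt (fun x : ℝ => stdNormalCDF (-x)) (-(stdNormalPDF ρ)) ρ := by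
    have := (hasDerivAt_cdf (-ρ)).comp ρ (hasDerivAt_neg ρ)
    simpa [pdf_even, Function.comp_def] using this
  have h3 : HasDerivAt stdNormalPDF (-ρ * stdNormalPDF ρ) ρ := hasDerivAt_pdf ρ
  have hnum : HasDerivAt (fun x : ℝ => x * stdNormalCDF (-x))
      (1 * stdNormalCDF (-ρ) + ρ * -(stdNormalPDF ρ)) ρ := (hasDerivAt_id ρ).mul h2
  have hdiv := hnum.div h3 hfne
  have hsub := hdiv.const_sub 1
  have hmul := h1.mul hsub
  have heq : optThreshold =
      fun x : ℝ => stdNormalCDF x * (1 - x * stdNormalCDF (-x) / stdNormalPDF x) := rfl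
  rw [heq]
  refine hmul.congr_deriv ?_
  simp only [Pi.div_apply]
  field_simp
  ring
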